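/- Let G = {1,...,d}^m and let A ⊆ G satisfy DAff(A) = A (i.e., A is affinely closed within the grid). If |A|/d^m ≥ 1/2, then dim Aff(σ(G)) − dim Aff(σ(A)) ≤ 2d·(d^m − |A|)/d^m. -/

import Mathlib

open Module Submodule

def sig {m d : ℕ} (z : Fin m → Fin d) : Fin m × Fin d → ℝ :=
  fun p => if z p.1 = p.2 then 1 else 0

namespace P10

/-- Generators: constant 1 and the one-hot coordinate functions. -/
def gen (m d : ℕ) : Set ((Fin m → Fin d) → ℝ) :=
  insert (fun _ => (1:ℝ)) {f | ∃ i a, f = fun z => if z i = a then (1:ℝ) else 0}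

/-- Degree ≤ 1 functions. -/
def Fm (m d : ℕ) : Submodule ℝ ((Fin m → Fin d) → ℝ) := Submodule.span ℝ (gen m d)

/-- Functions vanishing on `A`. -/
def van {m d : ℕ} (A : Finset (Fin m → Fin d)) : Submodule ℝ ((Fin m → Fin d) → ℝ) where
  carrier := {f | ∀ z ∈ A, f z = 0}
  add_mem' := by intro f g hf hg z hz; simp only [Pi.add_apply, hf z hz, hg z hz, add_zero]
  zero_mem' := by intro z hz; rfl
  smul_mem' := by intro c f hf z hz; simp only [Pi.smul_apply, hf z hz, smul_zero]

def ZF {m d : ℕ} (A : Finset (Fin m → Fin d)) : Submodule ℝ ((Fin m → Fin d) → ℝ) :=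
  Fm m d ⊓ van A

lemma mem_van {m d : ℕ} {A : Finset (Fin m → Fin d)} {f} :
    f ∈ van A ↔ ∀ z ∈ A, f z = 0 := Iff.rfl

/-- restriction to slice `a` -/
def rho {m d : ℕ} (a : Fin d) : ((Fin (m+1) → Fin d) → ℝ) →ₗ[ℝ] ((Fin m → Fin d) → ℝ) where
  toFun f := fun z' => f (Fin.cons a z')
  map_add' := by intro f g; rfl
  map_smul' := by intro c f; rfl

def slice {m d : ℕ} (A : Finset (Fin (m+1) → Fin d)) (a : Fin d) : Finset (Fin m → Fin d) :=
  Finset.univ.filter (fun z' => Fin.cons a z' ∈ A)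

lemma mem_slice {m d : ℕ} {A : Finset (Fin (m+1) → Fin d)} {a : Fin d} {z'} :
    z' ∈ slice A a ↔ Fin.cons a z' ∈ A := by simp [slice]

lemma rho_mem_Fm {m d : ℕ} (a : Fin d) {f} (hf : f ∈ Fm (m+1) d) :
    rho a f ∈ Fm m d := by
  induction hf using Submodule.span_induction with
  | mem x hx =>
    rcases hx with h1 | ⟨i, b, rfl⟩
    · subst h1
      exact Submodule.subset_span (Set.mem_insert _ _)
    · induction i using Fin.cases with
      | zero =>
        have : rho a (fun z : Fin (m+1) → Fin d => if z 0 = b then (1:ℝ) else 0)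
            = (if a = b then (1:ℝ) else 0) • (fun _ : Fin m → Fin d => (1:ℝ)) := by
          funext z'; simp [rho, smul_eq_mul, mul_one]
        rw [this]
        exact Submodule.smul_mem _ _ (Submodule.subset_span (Set.mem_insert _ _))
      | succ j =>
        have : rho a (fun z => if z j.succ = b then (1:ℝ) else 0)
            = (fun z' => if z' j = b then (1:ℝ) else 0) := by
          funext z'; simp [rho]
        rw [this]
        exact Submodule.subset_span (Set.mem_insert_of_mem _ ⟨j, b, rfl⟩)
  | zero => simp only [map_zero]; exact Submodule.zero_mem _
  | add x y hx hy ihx ihy => rw [map_add]; exact Submodule.add_mem _ ihx ihy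
  | smul c x hx ihx => rw [map_smul]; exact Submodule.smul_mem _ _ ihx

/-- slice-to-slice variation independence -/
lemma slice_var {m d : ℕ} {f} (hf : f ∈ Fm (m+1) d) (a a' : Fin d) (z' w' : Fin m → Fin d) :
    f (Fin.cons a z') - f (Fin.cons a w') = f (Fin.cons a' z') - f (Fin.cons a' w') := by
  induction hf using Submodule.span_induction with
  | mem x hx =>
    rcases hx with h1 | ⟨i, b, rfl⟩
    · subst h1; simp
    · induction i using Fin.cases with
      | zero => simp
      | succ j => simp
  | zero => simp
  | add x y hx hy ihx ihy => simp only [Pi.add_apply]; linarith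
  | smul c x hx ihx =>
    simp only [Pi.smul_apply, smul_eq_mul, ← mul_sub, ihx]

lemma card_slice_sum {m d : ℕ} (A : Finset (Fin (m+1) → Fin d)) :
    ∑ a, (slice A a).card = A.card := by
  rw [Finset.card_eq_sum_card_fiberwise (f := fun z => z 0) (t := Finset.univ)
    (fun z _ => Finset.mem_univ _)]
  refine Finset.sum_congr rfl (fun a _ => ?_)
  refine (Finset.card_nbij' (fun z : Fin (m+1) → Fin d => Fin.tail z)
    (fun z' : Fin m → Fin d => Fin.cons a z') ?_ ?_ ?_ ?_).symm
  · intro z hz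
    simp only [Finset.mem_coe, Finset.mem_filter] at hz
    simp only [slice, Finset.mem_coe, Finset.mem_filter, Finset.mem_univ, true_and]
    rw [← hz.2, Fin.cons_self_tail]
    exact hz.1
  · intro z' hz'
    simp only [slice, Finset.mem_coe, Finset.mem_filter, Finset.mem_univ, true_and] at hz'
    simp [hz']
  · intro z hz
    simp only [Finset.mem_coe, Finset.mem_filter] at hz
    show Fin.cons a (Fin.tail z) = z
    rw [← hz.2, Fin.cons_self_tail]
  · intro z' _
    simp [Fin.tail_cons]

lemma key : ∀ (m d : ℕ) (A : Finset (Fin m → Fin d)), d ^ m ≤ 2 * A.card →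
    finrank ℝ (ZF A) * d ^ (m - 1) + 2 * A.card ≤ 2 * d ^ m := by
  intro m
  induction m with
  | zero =>
    intro d A hA
    have hcard1 : Fintype.card (Fin 0 → Fin d) = 1 := by simp
    have hA1 : A.card ≤ 1 := by
      simpa [hcard1] using Finset.card_le_univ A
    have hApos : 1 ≤ A.card := by
      have h1 : (1:ℕ) ≤ 2 * A.card := by simpa using hA
      omega
    obtain ⟨z₀, hz₀⟩ := Finset.card_pos.mp hApos
    have hZF : ZF A = ⊥ := by
      rw [eq_bot_iff]
      intro f hf
      have h0 : f z₀ = 0 := hf.2 z₀ hz₀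
      have : f = 0 := by
        funext z
        have : z = z₀ := Subsingleton.elim _ _
        rw [this, h0]; rfl
      simp [this]
    rw [hZF, finrank_bot]
    simp only [pow_zero, zero_mul, zero_add]
    omega
  | succ m ih =>
    intro d A hA
    rcases Nat.eq_zero_or_pos d with hd | hd
    · -- d = 0 : everything degenerate
      subst hd
      haveI : IsEmpty (Fin (m+1) → Fin 0) := by
        refine ⟨fun z => ?_⟩
        exact (z 0).elim0
      haveI : Subsingleton ((Fin (m+1) → Fin 0) → ℝ) := by
        constructor
        intro f g; funext z; exact (z 0).elim0
      have hZF : ZF A = ⊥ := by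
        rw [eq_bot_iff]; intro f _; simp [Subsingleton.elim f 0]
      have hAe : A.card = 0 := by
        simp [Finset.card_eq_zero.mpr (Finset.eq_empty_of_isEmpty A)]
      rw [hZF, finrank_bot, hAe]
      simp
    · -- d ≥ 1
      obtain ⟨a₀, -, hmax⟩ := Finset.exists_max_image Finset.univ
        (fun a => (slice A a).card) ⟨⟨0, hd⟩, Finset.mem_univ _⟩
      set c₀ := (slice A a₀).card with hc₀
      -- half-density of the best slice
      have hsum := card_slice_sum A
      have hAd : A.card ≤ d * c₀ := by
        calc A.card = ∑ a, (slice A a).card := hsum.symm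
        _ ≤ ∑ _a : Fin d, c₀ := Finset.sum_le_sum (fun a _ => hmax a (Finset.mem_univ a))
        _ = d * c₀ := by simp [Finset.sum_const, mul_comm]
      have hhalf : d ^ m ≤ 2 * c₀ := by
        have h1 : d * d ^ m ≤ 2 * (d * c₀) := by
          calc d * d ^ m = d ^ (m+1) := (pow_succ' d m).symm
          _ ≤ 2 * A.card := hA
          _ ≤ 2 * (d * c₀) := by omega
        have h2 : d * d ^ m ≤ d * (2 * c₀) := by
          calc d * d ^ m ≤ 2 * (d * c₀) := h1
          _ = d * (2 * c₀) := by ring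
        exact Nat.le_of_mul_le_mul_left h2 hd
      have hIH := ih d (slice A a₀) hhalf
      -- the empty slices
      set T : Finset (Fin d) := Finset.univ.filter (fun a => slice A a = ∅) with hT
      set s := T.card with hs
      -- rank-nullity setup
      set Ψ : (ZF A) →ₗ[ℝ] ((Fin m → Fin d) → ℝ) := (rho a₀).comp (ZF A).subtype with hΨ
      have hrange : LinearMap.range Ψ ≤ ZF (slice A a₀) := by
        rintro - ⟨⟨f, hf⟩, rfl⟩
        refine ⟨rho_mem_Fm a₀ hf.1, ?_⟩
        intro z' hz'
        exact hf.2 _ (mem_slice.mp hz')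
      have hrk : finrank ℝ (LinearMap.range Ψ) ≤ finrank ℝ (ZF (slice A a₀)) :=
        Submodule.finrank_mono hrange
      -- kernel bound
      have hker : finrank ℝ (LinearMap.ker Ψ) ≤ s := by
        set z₀' : Fin m → Fin d := fun _ => ⟨0, hd⟩ with hz₀'
        set θ : (LinearMap.ker Ψ) →ₗ[ℝ] ({ a // a ∈ T } → ℝ) :=
          { toFun := fun f => fun a => (f : (Fin (m+1) → Fin d) → ℝ) (Fin.cons a.1 z₀')
            map_add' := by intro f g; rfl
            map_smul' := by intro c f; rfl } with hθ
        have hinj : Function.Injective θ := by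
          rw [injective_iff_map_eq_zero]
          intro f hf0
          have hkerf : ∀ w' : Fin m → Fin d,
              (f : (Fin (m+1) → Fin d) → ℝ) (Fin.cons a₀ w') = 0 := by
            intro w'
            have := f.2
            rw [LinearMap.mem_ker] at this
            exact congrFun this w'
          have hFm : (f : (Fin (m+1) → Fin d) → ℝ) ∈ Fm (m+1) d := (f.1).2.1
          apply Subtype.ext; apply Subtype.ext
          funext z
          have hz : z = Fin.cons (z 0) (Fin.tail z) := (Fin.cons_self_tail z).symm
          rw [hz]
          by_cases hAa : slice A (z 0) = ∅
          · have haT : z 0 ∈ T := by simp [hT, hAa]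
            have h1 : (f : (Fin (m+1) → Fin d) → ℝ) (Fin.cons (z 0) z₀') = 0 :=
              congrFun hf0 ⟨z 0, haT⟩
            have h2 := slice_var hFm (z 0) a₀ (Fin.tail z) z₀'
            rw [hkerf, hkerf, h1] at h2
            simpa using h2
          · obtain ⟨w', hw'⟩ := Finset.nonempty_iff_ne_empty.mpr hAa
            have h1 : (f : (Fin (m+1) → Fin d) → ℝ) (Fin.cons (z 0) w') = 0 :=
              (f.1).2.2 _ (mem_slice.mp hw')
            have h2 := slice_var hFm (z 0) a₀ (Fin.tail z) w'
            rw [hkerf, hkerf, h1] at h2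
            simpa using h2
        calc finrank ℝ (LinearMap.ker Ψ) ≤ finrank ℝ ({ a // a ∈ T } → ℝ) :=
              LinearMap.finrank_le_finrank_of_injective hinj
        _ = s := by rw [Module.finrank_pi]; exact Fintype.card_coe T
      have hrn := LinearMap.finrank_range_add_finrank_ker Ψ
      have hkk : finrank ℝ (ZF A) ≤ finrank ℝ (ZF (slice A a₀)) + s := by
        omega
      -- counting : A.card ≤ (d - s) * c₀
      have hcount : A.card + s * c₀ ≤ d * c₀ := by
        have hTzero : ∀ a ∈ T, (slice A a).card = 0 := by
          intro a ha
          rw [hT, Finset.mem_filter] at ha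
          rw [ha.2]; rfl
        have : ∑ a, (slice A a).card = ∑ a ∈ Finset.univ \ T, (slice A a).card := by
          rw [← Finset.sum_sdiff (Finset.subset_univ T)]
          rw [Finset.sum_congr rfl hTzero]
          simp
        have hle : A.card ≤ (Finset.univ \ T).card * c₀ := by
          rw [← hsum, this]
          calc ∑ a ∈ Finset.univ \ T, (slice A a).card
              ≤ ∑ _a ∈ Finset.univ \ T, c₀ :=
                Finset.sum_le_sum (fun a _ => hmax a (Finset.mem_univ a))
          _ = (Finset.univ \ T).card * c₀ := by rw [Finset.sum_const, smul_eq_mul]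
        have hcard : (Finset.univ \ T).card = d - s := by
          rw [Finset.card_sdiff]
          simp [hs]
        have hsd : s ≤ d := by
          calc s ≤ Fintype.card (Fin d) := by rw [hs]; exact Finset.card_le_univ T
          _ = d := Fintype.card_fin d
        rw [hcard] at hle
        have : (d - s) * c₀ + s * c₀ = d * c₀ := by
          rw [← Nat.add_mul]; rw [Nat.sub_add_cancel hsd]
        omega
      -- final arithmetic over ℝ
      set k := finrank ℝ (ZF A)
      set k₀ := finrank ℝ (ZF (slice A a₀))
      rw [Nat.add_sub_cancel]
      have goalR : (k : ℝ) * (d:ℝ) ^ m + 2 * (A.card : ℝ) ≤ 2 * (d:ℝ) ^ (m+1) := by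
        have f1 : (k : ℝ) ≤ (k₀ : ℝ) + (s : ℝ) := by exact_mod_cast hkk
        have f2 : (k₀ : ℝ) * (d:ℝ) ^ (m-1) + 2 * c₀ ≤ 2 * (d:ℝ)^m := by exact_mod_cast hIH
        have hd1 : (1:ℝ) ≤ (d:ℝ) := by exact_mod_cast hd
        have hpow : (d:ℝ) ^ m ≤ (d:ℝ) ^ (m-1) * (d:ℝ) := by
          rw [← pow_succ]
          exact pow_le_pow_right₀ hd1 (by omega)
        have hk₀0 : (0:ℝ) ≤ (k₀ : ℝ) := Nat.cast_nonneg _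
        have hstar : (k₀ : ℝ) * (d:ℝ)^m + 2 * (c₀:ℝ) * (d:ℝ) ≤ 2 * (d:ℝ)^(m+1) := by
          have h1 : (k₀ : ℝ) * (d:ℝ)^m ≤ (k₀ : ℝ) * ((d:ℝ)^(m-1) * (d:ℝ)) :=
            mul_le_mul_of_nonneg_left hpow hk₀0
          have h2 : ((k₀ : ℝ) * (d:ℝ)^(m-1) + 2*c₀) * (d:ℝ) ≤ 2 * (d:ℝ)^m * (d:ℝ) :=
            mul_le_mul_of_nonneg_right f2 (by linarith)
          rw [pow_succ]
          have h3 : ((k₀ : ℝ) * (d:ℝ)^(m-1) + 2*(c₀:ℝ)) * (d:ℝ)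
              = (k₀ : ℝ) * ((d:ℝ)^(m-1) * (d:ℝ)) + 2*(c₀:ℝ)*(d:ℝ) := by ring
          rw [h3] at h2
          linarith
        have f3 : (A.card : ℝ) + (s:ℝ) * (c₀:ℝ) ≤ (d:ℝ) * (c₀:ℝ) := by exact_mod_cast hcount
        have f4 : (d:ℝ)^m ≤ 2 * (c₀:ℝ) := by exact_mod_cast hhalf
        have hs0 : (0:ℝ) ≤ (s : ℝ) := Nat.cast_nonneg _
        have hP0 : (0:ℝ) ≤ (d:ℝ)^m := by positivity
        have g1 : (k:ℝ) * (d:ℝ)^m ≤ (k₀:ℝ) * (d:ℝ)^m + (s:ℝ) * (d:ℝ)^m := by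
          have := mul_le_mul_of_nonneg_right f1 hP0
          rwa [add_mul] at this
        have g2 : (s:ℝ) * (d:ℝ)^m ≤ (s:ℝ) * (2 * (c₀:ℝ)) :=
          mul_le_mul_of_nonneg_left f4 hs0
        linarith
      exact_mod_cast goalR

section Bridge

variable {m d : ℕ}

/-- ambient homogenized space -/
abbrev W (m d : ℕ) := ((Fin m × Fin d → ℝ) × ℝ)

/-- homogenized embedding -/
def E (z : Fin m → Fin d) : W m d := (sig z, 1)

lemma finrank_direction_add_one {S : Set (Fin m → Fin d)} (hS : S.Nonempty) :
    finrank ℝ (affineSpan ℝ (sig '' S)).direction + 1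
      = finrank ℝ (Submodule.span ℝ (E '' S)) := by
  obtain ⟨z₀, hz₀⟩ := hS
  have hp : sig z₀ ∈ sig '' S := Set.mem_image_of_mem _ hz₀
  set M : Submodule ℝ (Fin m × Fin d → ℝ) :=
    Submodule.span ℝ ((· -ᵥ sig z₀) '' (sig '' S)) with hM
  have hdir : (affineSpan ℝ (sig '' S)).direction = M := by
    rw [direction_affineSpan, vectorSpan_eq_span_vsub_set_right ℝ hp]
  set j : (Fin m × Fin d → ℝ) →ₗ[ℝ] W m d := LinearMap.inl ℝ _ ℝ with hj
  set v : W m d := (sig z₀, 1) with hv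
  have hsnd : ∀ x ∈ Submodule.map j M, Prod.snd x = 0 := by
    rintro - ⟨y, -, rfl⟩; rfl
  have hspan : Submodule.span ℝ (E '' S) = Submodule.map j M ⊔ Submodule.span ℝ {v} := by
    apply le_antisymm
    · rw [Submodule.span_le]
      rintro - ⟨z, hz, rfl⟩
      have h1 : E z = j (sig z -ᵥ sig z₀) + v := by
        apply Prod.ext
        · simp [E, hj, hv, vsub_eq_sub]
        · simp [E, hj, hv]
      rw [h1]
      refine Submodule.add_mem _ ?_ ?_
      · exact Submodule.mem_sup_left (Submodule.mem_map_of_mem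
          (Submodule.subset_span ⟨sig z, Set.mem_image_of_mem _ hz, rfl⟩))
      · exact Submodule.mem_sup_right (Submodule.subset_span rfl)
    · refine sup_le ?_ ?_
      · rw [hM, Submodule.map_span, Submodule.span_le]
        rintro - ⟨-, ⟨-, ⟨z, hz, rfl⟩, rfl⟩, rfl⟩
        have h1 : j (sig z -ᵥ sig z₀) = E z - E z₀ := by
          apply Prod.ext
          · simp [E, hj, vsub_eq_sub]
          · simp [E, hj]
        rw [SetLike.mem_coe, h1]
        exact Submodule.sub_mem _
          (Submodule.subset_span (Set.mem_image_of_mem _ hz))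
          (Submodule.subset_span (Set.mem_image_of_mem _ hz₀))
      · rw [Submodule.span_le, Set.singleton_subset_iff]
        exact Submodule.subset_span ⟨z₀, hz₀, rfl⟩
  have hinf : Submodule.map j M ⊓ Submodule.span ℝ {v} = ⊥ := by
    rw [eq_bot_iff]
    rintro x ⟨hx1, hx2⟩
    rw [SetLike.mem_coe, Submodule.mem_span_singleton] at hx2
    obtain ⟨c, rfl⟩ := hx2
    have : c * 1 = 0 := hsnd _ hx1
    have hc : c = 0 := by simpa using this
    simp [hc]
  have hvne : v ≠ 0 := by
    intro h
    have := congrArg Prod.snd h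
    simp [hv] at this
  have hdim := Submodule.finrank_sup_add_finrank_inf_eq (Submodule.map j M)
    (Submodule.span ℝ {v})
  rw [hinf, finrank_bot, add_zero, finrank_span_singleton hvne] at hdim
  have hmapdim : finrank ℝ (Submodule.map j M) = finrank ℝ M :=
    (LinearEquiv.finrank_eq (Submodule.equivMapOfInjective j LinearMap.inl_injective M)).symm
  rw [hspan, hdim, hmapdim, hdir]

/-- evaluation of a dual functional as a function on the grid -/
def Phi : Module.Dual ℝ (W m d) →ₗ[ℝ] ((Fin m → Fin d) → ℝ) where
  toFun φ := fun z => φ (E z)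
  map_add' := by intro φ ψ; rfl
  map_smul' := by intro c φ; rfl

lemma E_decomp (z : Fin m → Fin d) :
    E z = (∑ p : Fin m × Fin d, sig z p • ((Pi.single p (1:ℝ) : Fin m × Fin d → ℝ), (0:ℝ)))
      + ((0 : Fin m × Fin d → ℝ), (1:ℝ)) := by
  have h2 : (∑ p : Fin m × Fin d, sig z p • (Pi.single p (1:ℝ) : Fin m × Fin d → ℝ))
      = sig z := by
    funext q
    rw [Finset.sum_apply]
    simp [Pi.single_apply]
  apply Prod.ext
  · rw [Prod.fst_add, Prod.fst_sum]
    have h3 : ∑ p : Fin m × Fin d,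
        (sig z p • ((Pi.single p (1:ℝ) : Fin m × Fin d → ℝ), (0:ℝ))).1
        = ∑ p : Fin m × Fin d, sig z p • (Pi.single p (1:ℝ) : Fin m × Fin d → ℝ) :=
      Finset.sum_congr rfl (fun p _ => rfl)
    rw [h3, h2]
    show sig z = sig z + 0
    rw [add_zero]
  · rw [Prod.snd_add, Prod.snd_sum]
    have h3 : ∑ p : Fin m × Fin d,
        (sig z p • ((Pi.single p (1:ℝ) : Fin m × Fin d → ℝ), (0:ℝ))).2
        = ∑ p : Fin m × Fin d, sig z p • (0:ℝ) :=
      Finset.sum_congr rfl (fun p _ => rfl)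
    rw [h3]
    simp [E]

lemma Phi_mem_Fm (φ : Module.Dual ℝ (W m d)) : Phi φ ∈ Fm m d := by
  have hφ : Phi φ = (∑ p : Fin m × Fin d,
        φ ((Pi.single p (1:ℝ) : Fin m × Fin d → ℝ), (0:ℝ)) • (fun z => sig z p))
      + φ ((0 : Fin m × Fin d → ℝ), (1:ℝ)) • (fun _ => (1:ℝ)) := by
    funext z
    simp only [Phi, LinearMap.coe_mk, AddHom.coe_mk, Pi.add_apply, Finset.sum_apply,
      Pi.smul_apply, smul_eq_mul, mul_one]
    rw [E_decomp z, map_add, map_sum]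
    congr 1
    refine Finset.sum_congr rfl (fun p _ => ?_)
    rw [map_smul, smul_eq_mul, mul_comm]
  rw [hφ]
  refine Submodule.add_mem _ ?_ ?_
  · refine Submodule.sum_mem _ (fun p _ => Submodule.smul_mem _ _ ?_)
    exact Submodule.subset_span (Set.mem_insert_of_mem _ ⟨p.1, p.2, rfl⟩)
  · exact Submodule.smul_mem _ _ (Submodule.subset_span (Set.mem_insert _ _))

lemma Fm_le_range_Phi : Fm m d ≤ LinearMap.range (Phi (m := m) (d := d)) := by
  rw [Fm, Submodule.span_le]
  rintro f (h1 | ⟨i, b, rfl⟩)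
  · refine ⟨LinearMap.snd ℝ _ ℝ, ?_⟩
    subst h1; rfl
  · refine ⟨(LinearMap.proj (i, b)).comp (LinearMap.fst ℝ _ ℝ), ?_⟩
    rfl

lemma ker_Phi : LinearMap.ker (Phi (m := m) (d := d))
    = (Submodule.span ℝ (E '' (Set.univ : Set (Fin m → Fin d)))).dualAnnihilator := by
  ext φ
  rw [LinearMap.mem_ker, Submodule.mem_dualAnnihilator]
  constructor
  · intro h w hw
    have hle : Submodule.span ℝ (E '' Set.univ) ≤ LinearMap.ker φ := by
      rw [Submodule.span_le]
      rintro - ⟨z, -, rfl⟩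
      exact congrFun h z
    exact hle hw
  · intro h
    funext z
    exact h (E z) (Submodule.subset_span ⟨z, Set.mem_univ z, rfl⟩)

lemma map_Phi_ann (A : Finset (Fin m → Fin d)) :
    Submodule.map (Phi (m := m) (d := d))
      (Submodule.span ℝ (E '' (A : Set (Fin m → Fin d)))).dualAnnihilator = ZF A := by
  apply le_antisymm
  · rintro - ⟨φ, hφ, rfl⟩
    simp only [SetLike.mem_coe] at hφ
    rw [Submodule.mem_dualAnnihilator] at hφ
    refine ⟨Phi_mem_Fm φ, ?_⟩
    intro z hz
    exact hφ (E z) (Submodule.subset_span ⟨z, hz, rfl⟩)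
  · rintro f ⟨hf1, hf2⟩
    obtain ⟨φ, rfl⟩ := Fm_le_range_Phi hf1
    refine ⟨φ, ?_, rfl⟩
    simp only [SetLike.mem_coe]
    rw [Submodule.mem_dualAnnihilator]
    intro w hw
    have hle : Submodule.span ℝ (E '' (A : Set (Fin m → Fin d))) ≤ LinearMap.ker φ := by
      rw [Submodule.span_le]
      rintro - ⟨z, hz, rfl⟩
      exact hf2 z hz
    exact hle hw

end Bridge

section Final

variable {m d : ℕ}

lemma span_add_ann (S : Set (Fin m → Fin d)) :
    finrank ℝ (Submodule.span ℝ (E '' S))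
      + finrank ℝ (Submodule.span ℝ (E '' S)).dualAnnihilator = finrank ℝ (W m d) := by
  set U := Submodule.span ℝ (E '' S)
  have h1 : finrank ℝ U.dualAnnihilator = finrank ℝ (W m d ⧸ U) :=
    (LinearEquiv.finrank_eq (Subspace.quotEquivAnnihilator U)).symm
  rw [h1, add_comm]
  exact Submodule.finrank_quotient_add_finrank U

lemma ann_rank_eq (A : Finset (Fin m → Fin d)) :
    finrank ℝ (Submodule.span ℝ (E '' (A : Set (Fin m → Fin d)))).dualAnnihilator
      = finrank ℝ (ZF A)
        + finrank ℝ (Submodule.span ℝ (E '' (Set.univ : Set (Fin m → Fin d)))).dualAnnihilator := by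
  set annA : Submodule ℝ ((W m d) →ₗ[ℝ] ℝ) :=
    (Submodule.span ℝ (E '' (A : Set (Fin m → Fin d)))).dualAnnihilator with hannA
  set annG : Submodule ℝ ((W m d) →ₗ[ℝ] ℝ) :=
    (Submodule.span ℝ (E '' (Set.univ : Set (Fin m → Fin d)))).dualAnnihilator with hannG
  have hle : annG ≤ annA := by
    intro φ hφ
    rw [hannG, Submodule.mem_dualAnnihilator] at hφ
    rw [hannA, Submodule.mem_dualAnnihilator]
    intro w hw
    refine hφ w (Submodule.span_mono (Set.image_mono (Set.subset_univ _)) hw)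
  set Phi' : ((W m d) →ₗ[ℝ] ℝ) →ₗ[ℝ] ((Fin m → Fin d) → ℝ) := Phi with hPhi'
  set Ψ : annA →ₗ[ℝ] ((Fin m → Fin d) → ℝ) := Phi'.comp annA.subtype with hΨ
  have hrange : LinearMap.range Ψ = ZF A := by
    rw [hΨ, LinearMap.range_comp, Submodule.range_subtype, hPhi', hannA, map_Phi_ann]
  have hker : LinearMap.ker Ψ = Submodule.comap annA.subtype annG := by
    rw [hΨ, LinearMap.ker_comp, hPhi']
    congr 1
    exact ker_Phi
  have hkerrank : finrank ℝ (LinearMap.ker Ψ) = finrank ℝ annG := by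
    rw [hker]
    exact LinearEquiv.finrank_eq (Submodule.comapSubtypeEquivOfLe hle)
  have hrn := LinearMap.finrank_range_add_finrank_ker (K := ℝ) (V := annA) Ψ
  rw [hrange, hkerrank] at hrn
  exact hrn.symm

end Final

end P10

theorem stmt10 {m d : ℕ} (A : Finset (Fin m → Fin d))
    (hclosed : ∀ z : Fin m → Fin d,
      sig z ∈ affineSpan ℝ (sig '' (A : Set (Fin m → Fin d))) → z ∈ A)
    (hbig : (1 : ℝ) / 2 ≤ (A.card : ℝ) / (d : ℝ) ^ m) :
    (Module.finrank ℝ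
        (affineSpan ℝ (Set.range (sig (m := m) (d := d)))).direction : ℝ) -
      (Module.finrank ℝ
        (affineSpan ℝ (sig '' (A : Set (Fin m → Fin d)))).direction : ℝ) ≤
      2 * d * (((d : ℝ) ^ m - A.card) / (d : ℝ) ^ m) := by
  classical
  have hP0 : (0:ℝ) ≤ (d:ℝ)^m := by positivity
  have hPne : ((d:ℝ)^m) ≠ 0 := by
    intro h; rw [h, div_zero] at hbig; linarith
  have hpos : (0:ℝ) < (d:ℝ)^m := lt_of_le_of_ne hP0 (Ne.symm hPne)
  have hcard2 : d ^ m ≤ 2 * A.card := by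
    have h := (div_le_div_iff₀ (by norm_num : (0:ℝ) < 2) hpos).mp hbig
    have h2 : ((d:ℝ))^m ≤ 2 * (A.card:ℝ) := by linarith
    exact_mod_cast h2
  have hgridpos : 0 < d ^ m := by
    by_contra h
    push_neg at h
    have h0 : d ^ m = 0 := Nat.le_zero.mp h
    exact hPne (by exact_mod_cast congrArg (Nat.cast (R := ℝ)) h0)
  have hcardfun : Fintype.card (Fin m → Fin d) = d ^ m := by simp
  have hcard_le : A.card ≤ d ^ m := by
    have h := Finset.card_le_univ A
    rwa [hcardfun] at h
  have hAp : 0 < A.card := by omega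
  obtain ⟨z₀, hz₀⟩ := Finset.card_pos.mp hAp
  have hAne : (A : Set (Fin m → Fin d)).Nonempty := ⟨z₀, hz₀⟩
  have hGne : (Set.univ : Set (Fin m → Fin d)).Nonempty := ⟨z₀, trivial⟩
  have h1 := P10.finrank_direction_add_one hAne
  have h2 := P10.finrank_direction_add_one hGne
  have h3 := P10.span_add_ann (m := m) (d := d) (A : Set (Fin m → Fin d))
  have h4 := P10.span_add_ann (m := m) (d := d) (Set.univ : Set (Fin m → Fin d))
  have h5 := P10.ann_rank_eq A
  have hkey := P10.key m d A hcard2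
  rw [← Set.image_univ]
  set k := Module.finrank ℝ (P10.ZF A) with hk
  set nA := Module.finrank ℝ (affineSpan ℝ (sig '' (A : Set (Fin m → Fin d)))).direction with hnA
  set nG := Module.finrank ℝ
    (affineSpan ℝ (sig '' (Set.univ : Set (Fin m → Fin d)))).direction with hnG
  have hng : nG = nA + k := by omega
  rw [hng]
  have hsub : ((nA + k : ℕ):ℝ) - (nA:ℝ) = (k:ℝ) := by push_cast; ring
  rw [hsub, ← mul_div_assoc, le_div_iff₀ hpos]
  rcases Nat.eq_zero_or_pos d with hd0 | hd
  · subst hd0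
    have hm : m = 0 := by
      by_contra hm
      rw [Nat.zero_pow (Nat.pos_of_ne_zero hm)] at hgridpos
      exact absurd hgridpos (lt_irrefl 0)
    subst hm
    have hcard1 : A.card = 1 := by
      simp only [pow_zero] at hcard_le hcard2
      omega
    have hk0 : k = 0 := by
      simp only [Nat.sub_self, pow_zero, mul_one] at hkey
      omega
    rw [hk0, hcard1]
    norm_num
  · have hd1 : (1:ℝ) ≤ (d:ℝ) := by exact_mod_cast hd
    have hkeyR : (k:ℝ) * (d:ℝ)^(m-1) + 2*(A.card:ℝ) ≤ 2*(d:ℝ)^m := by exact_mod_cast hkey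
    have hpow : (d:ℝ)^m ≤ (d:ℝ)^(m-1) * (d:ℝ) := by
      rw [← pow_succ]
      exact pow_le_pow_right₀ hd1 (by omega)
    have hk0 : (0:ℝ) ≤ (k:ℝ) := Nat.cast_nonneg _
    calc (k:ℝ) * (d:ℝ)^m ≤ (k:ℝ) * ((d:ℝ)^(m-1) * (d:ℝ)) :=
          mul_le_mul_of_nonneg_left hpow hk0
    _ = ((k:ℝ) * (d:ℝ)^(m-1)) * (d:ℝ) := by ring
    _ ≤ (2*(d:ℝ)^m - 2*(A.card:ℝ)) * (d:ℝ) :=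
          mul_le_mul_of_nonneg_right (by linarith) (by linarith)
    _ = 2*(d:ℝ)*((d:ℝ)^m - (A.card:ℝ)) := by ring
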